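/- Let Mᵢ, Kᵢ, Tᵢ be real nᵢ×nᵢ matrices for i = 0, 1, 2 with Tᵢᵀ * Mᵢ * Tᵢ = 1 and Tᵢᵀ * Kᵢ * Tᵢ = Matrix.diagonal dᵢ for vectors dᵢ : Fin nᵢ → ℝ, and assume d₂ i + d₁ j + d₀ k ≠ 0 for all i, j, k. Then the three-dimensional tensor-product operator A_b = M₂ ⊗ₖ M₁ ⊗ₖ K₀ + M₂ ⊗ₖ K₁ ⊗ₖ M₀ + K₂ ⊗ₖ M₁ ⊗ₖ M₀ is invertible, and A_b * ((T₂ ⊗ₖ T₁ ⊗ₖ T₀) * D⁻¹ * (T₂ᵀ ⊗ₖ T₁ᵀ ⊗ₖ T₀ᵀ)) = 1, where D is the diagonal matrix with entries d₂ i + d₁ j + d₀ k. This is the fast diagonalization formula for the inverse of the local patch matrix in three dimensions. -/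

import Mathlib

open Matrix Kronecker

lemma aux_isUnit_T {n : ℕ} (M T : Matrix (Fin n) (Fin n) ℝ)
    (h : Tᵀ * M * T = 1) : IsUnit T.det := by
  have := congrArg Matrix.det h
  simp only [Matrix.det_mul, Matrix.det_one] at this
  exact IsUnit.of_mul_eq_one (a := T.det) (Tᵀ.det * M.det) (by linear_combination this)

/-- Fast diagonalization formula for the inverse of the local patch matrix in
three dimensions: if `Tᵢᵀ Mᵢ Tᵢ = 1`, `Tᵢᵀ Kᵢ Tᵢ = diag dᵢ` for `i = 0, 1, 2`
and all sums `d₂ i + d₁ j + d₀ k` are nonzero, then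
`A_b = M₂ ⊗ₖ M₁ ⊗ₖ K₀ + M₂ ⊗ₖ K₁ ⊗ₖ M₀ + K₂ ⊗ₖ M₁ ⊗ₖ M₀` is invertible with
inverse `(T₂ ⊗ₖ T₁ ⊗ₖ T₀) * D⁻¹ * (T₂ᵀ ⊗ₖ T₁ᵀ ⊗ₖ T₀ᵀ)`, where `D` is the
diagonal matrix with entries `d₂ i + d₁ j + d₀ k`. -/
theorem fast_diagonalization_inverse_3D
    {n₀ n₁ n₂ : ℕ}
    (M₀ K₀ T₀ : Matrix (Fin n₀) (Fin n₀) ℝ)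
    (M₁ K₁ T₁ : Matrix (Fin n₁) (Fin n₁) ℝ)
    (M₂ K₂ T₂ : Matrix (Fin n₂) (Fin n₂) ℝ)
    (d₀ : Fin n₀ → ℝ) (d₁ : Fin n₁ → ℝ) (d₂ : Fin n₂ → ℝ)
    (hM₀ : T₀ᵀ * M₀ * T₀ = 1) (hM₁ : T₁ᵀ * M₁ * T₁ = 1) (hM₂ : T₂ᵀ * M₂ * T₂ = 1)
    (hK₀ : T₀ᵀ * K₀ * T₀ = Matrix.diagonal d₀)
    (hK₁ : T₁ᵀ * K₁ * T₁ = Matrix.diagonal d₁)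
    (hK₂ : T₂ᵀ * K₂ * T₂ = Matrix.diagonal d₂)
    (hd : ∀ (i : Fin n₂) (j : Fin n₁) (k : Fin n₀), d₂ i + d₁ j + d₀ k ≠ 0) :
    IsUnit (M₂ ⊗ₖ (M₁ ⊗ₖ K₀) + M₂ ⊗ₖ (K₁ ⊗ₖ M₀) + K₂ ⊗ₖ (M₁ ⊗ₖ M₀)) ∧
    (M₂ ⊗ₖ (M₁ ⊗ₖ K₀) + M₂ ⊗ₖ (K₁ ⊗ₖ M₀) + K₂ ⊗ₖ (M₁ ⊗ₖ M₀)) *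
      ((T₂ ⊗ₖ (T₁ ⊗ₖ T₀)) *
        (Matrix.diagonal fun p : Fin n₂ × (Fin n₁ × Fin n₀) =>
          d₂ p.1 + d₁ p.2.1 + d₀ p.2.2)⁻¹ *
        (T₂ᵀ ⊗ₖ (T₁ᵀ ⊗ₖ T₀ᵀ))) = 1 := by
  set A := M₂ ⊗ₖ (M₁ ⊗ₖ K₀) + M₂ ⊗ₖ (K₁ ⊗ₖ M₀) + K₂ ⊗ₖ (M₁ ⊗ₖ M₀) with hA
  set Dv : Fin n₂ × (Fin n₁ × Fin n₀) → ℝ := fun p => d₂ p.1 + d₁ p.2.1 + d₀ p.2.2 with hDv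
  set T : Matrix (Fin n₂ × (Fin n₁ × Fin n₀)) (Fin n₂ × (Fin n₁ × Fin n₀)) ℝ :=
    T₂ ⊗ₖ (T₁ ⊗ₖ T₀) with hTdef
  have hTt : T₂ᵀ ⊗ₖ (T₁ᵀ ⊗ₖ T₀ᵀ) = Tᵀ := by
    rw [hTdef, ← Matrix.kroneckerMap_transpose, ← Matrix.kroneckerMap_transpose]
  -- diagonalization: Tᵀ * A * T = diagonal Dv
  have key : Tᵀ * A * T = Matrix.diagonal Dv := by
    rw [hA, ← hTt, hTdef]
    rw [Matrix.mul_add, Matrix.mul_add, Matrix.add_mul, Matrix.add_mul]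
    rw [← Matrix.mul_kronecker_mul, ← Matrix.mul_kronecker_mul,
        ← Matrix.mul_kronecker_mul, ← Matrix.mul_kronecker_mul,
        ← Matrix.mul_kronecker_mul, ← Matrix.mul_kronecker_mul,
        ← Matrix.mul_kronecker_mul, ← Matrix.mul_kronecker_mul,
        ← Matrix.mul_kronecker_mul, ← Matrix.mul_kronecker_mul,
        ← Matrix.mul_kronecker_mul, ← Matrix.mul_kronecker_mul,
        hM₀, hM₁, hM₂, hK₀, hK₁, hK₂]
    ext ⟨i, j, k⟩ ⟨i', j', k'⟩
    simp only [Matrix.add_apply, Matrix.kroneckerMap_apply, Matrix.one_apply,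
      Matrix.diagonal_apply, hDv]
    by_cases h2 : i = i' <;> by_cases h1 : j = j' <;> by_cases h0 : k = k' <;>
      simp [h2, h1, h0, Prod.ext_iff] <;> ring
  have hdT₀ := aux_isUnit_T M₀ T₀ hM₀
  have hdT₁ := aux_isUnit_T M₁ T₁ hM₁
  have hdT₂ := aux_isUnit_T M₂ T₂ hM₂
  have hdT : IsUnit T.det := by
    rw [hTdef, Matrix.det_kronecker, Matrix.det_kronecker]
    exact (hdT₂.pow _).mul ((hdT₁.pow _).mul (hdT₀.pow _) |>.pow _)
  have hdTt : IsUnit Tᵀ.det := by rwa [Matrix.det_transpose]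
  have hdD : IsUnit (Matrix.diagonal Dv).det := by
    rw [Matrix.det_diagonal]
    exact isUnit_iff_ne_zero.mpr (Finset.prod_ne_zero_iff.mpr fun p _ => hd p.1 p.2.1 p.2.2)
  -- A = Tᵀ⁻¹ * diagonal Dv * T⁻¹
  have hAeq : A = Tᵀ⁻¹ * Matrix.diagonal Dv * T⁻¹ := by
    rw [← key, ← Matrix.mul_assoc Tᵀ⁻¹ (Tᵀ * A) T,
      Matrix.mul_nonsing_inv_cancel_right _ _ hdT,
      Matrix.nonsing_inv_mul_cancel_left _ _ hdTt]
  have hmul : A * (T * (Matrix.diagonal Dv)⁻¹ * Tᵀ) = 1 := by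
    rw [hAeq]
    simp only [Matrix.mul_assoc]
    rw [Matrix.nonsing_inv_mul_cancel_left _ _ hdT,
      Matrix.mul_nonsing_inv_cancel_left _ _ hdD, Matrix.nonsing_inv_mul _ hdTt]
  rw [hTt]
  refine ⟨(Matrix.isUnit_iff_isUnit_det A).mpr
    (IsUnit.of_mul_eq_one (a := A.det) (T * (Matrix.diagonal Dv)⁻¹ * Tᵀ).det ?_), hmul⟩
  rw [← Matrix.det_mul, hmul, Matrix.det_one]
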